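/- Let β > 1 be irrational, n ≥ 2 an integer, and suppose n²β² = p·n·β + q with integers p ≥ q ≥ 1, n < p, and write p = n·s + t with 0 ≤ t ≤ n-1. If ⌊β + 1/n⌋ = ⌊β⌋ + 1, then t = n - 1 and β + 1/n - ⌊β + 1/n⌋ = q/(n²β). -/

import Mathlib

theorem stmt_10 (β : ℝ) (hirr : Irrational β) (hβ : 1 < β)
    (n p q s t : ℤ) (hn : 2 ≤ n) (hq : 1 ≤ q) (hpq : q ≤ p) (hnp : n < p)
    (heq : (n : ℝ) ^ 2 * β ^ 2 = (p : ℝ) * (n : ℝ) * β + (q : ℝ))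
    (hdiv : p = n * s + t) (ht : 0 ≤ t) (ht' : t ≤ n - 1)
    (hfloor : ⌊β + 1 / (n : ℝ)⌋ = ⌊β⌋ + 1) :
    t = n - 1 ∧
      β + 1 / (n : ℝ) - (⌊β + 1 / (n : ℝ)⌋ : ℝ) = (q : ℝ) / ((n : ℝ) ^ 2 * β) := by
  have hnR : (2:ℝ) ≤ (n:ℝ) := by exact_mod_cast hn
  have hn0 : (0:ℝ) < (n:ℝ) := by linarith
  have hβ0 : (0:ℝ) < β := by linarith
  set x : ℝ := (n:ℝ) * β with hxdef
  have hx0 : 0 < x := mul_pos hn0 hβ0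
  have hxq : x * (x - (p:ℝ)) = (q:ℝ) := by rw [hxdef]; nlinarith [heq]
  have hq0 : (1:ℝ) ≤ (q:ℝ) := by exact_mod_cast hq
  have hpq' : (q:ℝ) ≤ (p:ℝ) := by exact_mod_cast hpq
  have hp0 : (0:ℝ) < (p:ℝ) := by linarith
  have hxp : (p:ℝ) < x := by nlinarith
  have hxq1 : x < (p:ℝ) + 1 := by nlinarith
  have hdivR : (p:ℝ) = (n:ℝ) * (s:ℝ) + (t:ℝ) := by exact_mod_cast hdiv
  have htR : (0:ℝ) ≤ (t:ℝ) := by exact_mod_cast ht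
  have htR' : (t:ℝ) ≤ (n:ℝ) - 1 := by exact_mod_cast ht'
  -- floor β = s
  have hβlow : (s:ℝ) ≤ β := by
    rw [← mul_le_mul_iff_right₀ hn0]
    nlinarith
  have hβhigh : β < (s:ℝ) + 1 := by
    rw [← mul_lt_mul_iff_right₀ hn0]
    nlinarith
  have hfloorβ : ⌊β⌋ = s := by
    apply Int.floor_eq_iff.mpr
    constructor <;> [exact hβlow; exact_mod_cast hβhigh]
  rw [hfloorβ] at hfloor
  have hle : ((s:ℝ) + 1) ≤ β + 1 / (n:ℝ) := by
    have := Int.floor_le (β + 1 / (n:ℝ))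
    rw [hfloor] at this
    push_cast at this
    linarith
  -- from hle : nβ + 1 ≥ ns + n, so x ≥ p - t + n - 1
  have hxge : (p:ℝ) - (t:ℝ) + (n:ℝ) - 1 ≤ x := by
    have h1 : (n:ℝ) * ((s:ℝ) + 1) ≤ (n:ℝ) * (β + 1 / (n:ℝ)) := by
      exact mul_le_mul_of_nonneg_left hle (le_of_lt hn0)
    have h2 : (n:ℝ) * (1 / (n:ℝ)) = 1 := by field_simp
    nlinarith
  have htgt : (n:ℝ) - 2 < (t:ℝ) := by linarith
  have htn : t = n - 1 := by
    have : n - 2 < t := by exact_mod_cast htgt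
    omega
  refine ⟨htn, ?_⟩
  rw [hfloor]
  have htnR : (t:ℝ) = (n:ℝ) - 1 := by exact_mod_cast htn
  have hne : (n:ℝ) ^ 2 * β ≠ 0 := by positivity
  have hnne : (n:ℝ) ≠ 0 := ne_of_gt hn0
  rw [eq_div_iff hne]
  push_cast
  field_simp
  linear_combination heq + ((n:ℝ)*β)*hdivR + ((n:ℝ)*β)*htnR
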